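/- For every integer $f \ge 1$, the identity $\sum_{u=0}^{f} \sum_{x=0}^{f-u} (-1)^{u+x}\, v^{u(1-f) - u(u+1)/2 - (f+u+1)x}\, \dfrac{1}{[x]!\,[f-u-x]!}\, (v - v^{-1})^u = 0$ holds in $\mathbb{Q}(v)$. -/

import Mathlib

noncomputable section

abbrev K : Type := RatFunc ℚ

/-- The indeterminate `v` in `ℚ(v)`. -/
def v : K := RatFunc.X

/-- Quantum integer `[m] = (v^m - v^{-m})/(v - v^{-1})`. -/
def qint (m : ℤ) : K := (v ^ m - v ^ (-m)) / (v - v⁻¹)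

/-- Quantum factorial `[r]! = ∏_{i=1}^r [i]`. -/
def qfact (r : ℕ) : K := ∏ i ∈ Finset.range r, qint ((i : ℤ) + 1)

/-- Quantum double factorial `[2r]!! = ∏_{i=1}^r [2i]`. -/
def qdfact (r : ℕ) : K := ∏ i ∈ Finset.range r, qint (2 * ((i : ℤ) + 1))

/-- Balanced Gaussian binomial coefficient `[m][m-1]⋯[m-r+1]/[r]!`. -/
def qbinom (m : ℤ) (r : ℕ) : K := (∏ i ∈ Finset.range r, qint (m - (i : ℤ))) / qfact r

/-- Gaussian binomial with integer lower index, vanishing for negative lower index. -/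
def qbinomZ (m r : ℤ) : K := if 0 ≤ r then qbinom m r.toNat else 0


lemma hv : v ≠ 0 := RatFunc.X_ne_zero

lemma v_pow_ne_one (k : ℕ) (hk : k ≠ 0) : v ^ k ≠ 1 := by
  intro h
  have h2 : (Polynomial.X : Polynomial ℚ) ^ k = 1 := by
    apply RatFunc.algebraMap_injective ℚ
    simpa [v, RatFunc.algebraMap_X, map_pow] using h
  have := congrArg Polynomial.natDegree h2
  simp [Polynomial.natDegree_X_pow] at this
  exact hk this

lemma num_ne (k : ℕ) (hk : k ≠ 0) : v ^ (k : ℤ) - v ^ (-(k : ℤ)) ≠ 0 := by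
  intro h
  apply v_pow_ne_one (2 * k) (by omega)
  have h1 : v ^ (k : ℤ) = v ^ (-(k : ℤ)) := by linear_combination h
  have := congrArg (· * v ^ (k : ℤ)) h1
  simp only [← zpow_add₀ hv] at this
  have h3 : v ^ ((k:ℤ) + k) = 1 := by simpa using this
  rw [← zpow_natCast v (2*k)]
  push_cast
  rw [two_mul]; exact h3

lemma hvv : v - v⁻¹ ≠ 0 := by
  have := num_ne 1 one_ne_zero
  simpa [zpow_one] using this

lemma qint_nat_ne (k : ℕ) (hk : k ≠ 0) : qint k ≠ 0 :=
  div_ne_zero (num_ne k hk) hvv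

lemma qint_zero : qint 0 = 0 := by simp [qint]

lemma qfact_ne (r : ℕ) : qfact r ≠ 0 := by
  apply Finset.prod_ne_zero_iff.2
  intro i _
  have : ((i : ℤ) + 1) = ((i + 1 : ℕ) : ℤ) := by push_cast; ring
  rw [this]
  exact qint_nat_ne (i+1) (by omega)

lemma qfact_succ (r : ℕ) : qfact (r+1) = qfact r * qint ((r : ℤ)+1) :=
  Finset.prod_range_succ _ r

lemma qint_add (a b : ℤ) : qint (a+b) = v ^ b * qint a + v ^ (-a) * qint b := by
  unfold qint
  rw [zpow_add₀ hv, neg_add, zpow_add₀ hv]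
  ring

lemma qint_mul_vv (m : ℤ) : qint m * (v - v⁻¹) = v ^ m - v ^ (-m) :=
  div_mul_cancel₀ _ hvv

lemma one_sub_sq (m : ℤ) : (1 : K) - v ^ (-(2*m)) = v ^ (-m) * (v - v⁻¹) * qint m := by
  have h := qint_mul_vv m
  have : v ^ (-m) * (v - v⁻¹) * qint m = v ^ (-m) * (v ^ m - v ^ (-m)) := by
    rw [mul_assoc, mul_comm (v - v⁻¹), h]
  rw [this, mul_sub, ← zpow_add₀ hv, ← zpow_add₀ hv]
  have e1 : -m + m = 0 := by ring
  have e2 : -m + -m = -(2*m) := by ring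
  rw [e1, e2, zpow_zero]

lemma qfact_add (a b : ℕ) :
    qfact (a+b) = qfact a * ∏ j ∈ Finset.range b, qint ((a : ℤ) + j + 1) := by
  unfold qfact
  rw [Finset.prod_range_add]
  refine congrArg _ (Finset.prod_congr rfl fun j _ => ?_)
  push_cast
  ring

lemma qint_succ_ne (k : ℕ) : qint ((k:ℤ)+1) ≠ 0 := by
  have h := qint_nat_ne (k+1) (by omega)
  have : ((k+1 : ℕ) : ℤ) = (k:ℤ)+1 := by push_cast; ring
  rwa [this] at h

def F (n : ℕ) (c : ℤ) : K :=
  ∑ x ∈ Finset.range (n+1),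
    (-1:K)^x * v ^ (-((n:ℤ) + 2*c + 1) * (x:ℤ)) / (qfact x * qfact (n - x))

lemma Ehelper (n c : ℤ) :
    -(n+1)*c - (n+1)*(n+2)/2 = (-n*c - n*(n+1)/2) + (-(n+c+1)) := by
  obtain ⟨a, ha⟩ := Int.even_mul_succ_self n
  obtain ⟨b, hb⟩ := Int.even_mul_succ_self (n+1)
  have ha2 : n*(n+1) = 2*a := by linarith
  have hb2 : (n+1)*(n+2) = 2*b := by linear_combination hb
  rw [ha2, hb2, Int.mul_ediv_cancel_left _ two_ne_zero,
    Int.mul_ediv_cancel_left _ two_ne_zero]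
  have h2 : 2*b = 2*a + 2*(n+1) := by linear_combination ha2 - hb2
  have hba : b = a + n + 1 := by omega
  linear_combination (-1 : ℤ) * hba

lemma term_split (n x : ℕ) (c : ℤ) :
    qint ((n:ℤ)+1) *
      ((-1:K)^x * v ^ (-(((n:ℤ)+1) + 2*c + 1) * (x:ℤ)) / (qfact x * qfact (n+1-x)))
    = (-1:K)^x * v ^ (-((n:ℤ) + 2*c + 1) * (x:ℤ)) * qint ((n:ℤ)+1-x)
        / (qfact x * qfact (n+1-x))
      + (-1:K)^x * v ^ (-((n:ℤ) + 2*c + 1) * (x:ℤ) - ((n:ℤ)+1)) * qint (x:ℤ)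
        / (qfact x * qfact (n+1-x)) := by
  have h1 := qint_add ((n:ℤ)+1-(x:ℤ)) (x:ℤ)
  rw [show ((n:ℤ)+1-(x:ℤ)) + (x:ℤ) = (n:ℤ)+1 by ring] at h1
  have e1 : v ^ (-(((n:ℤ)+1) + 2*c + 1) * (x:ℤ)) * v ^ (x:ℤ)
      = v ^ (-((n:ℤ) + 2*c + 1) * (x:ℤ)) := by
    rw [← zpow_add₀ hv]; congr 1; ring
  have e2 : v ^ (-(((n:ℤ)+1) + 2*c + 1) * (x:ℤ)) * v ^ (-((n:ℤ)+1-(x:ℤ)))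
      = v ^ (-((n:ℤ) + 2*c + 1) * (x:ℤ) - ((n:ℤ)+1)) := by
    rw [← zpow_add₀ hv]; congr 1; ring
  rw [h1, ← e1, ← e2]
  ring

lemma F_rec (n : ℕ) (c : ℤ) :
    qint ((n:ℤ)+1) * F (n+1) c
      = (1 - v ^ (-(2*((n:ℤ)+c+1)))) * F n c := by
  have cast1 : ((n+1 : ℕ) : ℤ) = (n:ℤ)+1 := by push_cast; ring
  rw [F, Finset.mul_sum]
  have hsplit : ∀ x ∈ Finset.range (n+2),
      qint ((n:ℤ)+1) *
        ((-1:K)^x * v ^ (-(((n+1:ℕ):ℤ) + 2*c + 1) * (x:ℤ)) / (qfact x * qfact (n+1-x)))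
      = ((-1:K)^x * v ^ (-((n:ℤ) + 2*c + 1) * (x:ℤ)) * qint ((n:ℤ)+1-x)
          / (qfact x * qfact (n+1-x)))
        + ((-1:K)^x * v ^ (-((n:ℤ) + 2*c + 1) * (x:ℤ) - ((n:ℤ)+1)) * qint (x:ℤ)
          / (qfact x * qfact (n+1-x))) := by
    intro x _
    rw [cast1]
    exact term_split n x c
  rw [Finset.sum_congr rfl hsplit, Finset.sum_add_distrib]
  -- First sum = F n c
  have hA : (∑ x ∈ Finset.range (n+2),
      (-1:K)^x * v ^ (-((n:ℤ) + 2*c + 1) * (x:ℤ)) * qint ((n:ℤ)+1-x)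
        / (qfact x * qfact (n+1-x))) = F n c := by
    rw [Finset.sum_range_succ]
    have hlast : (-1:K)^(n+1) * v ^ (-((n:ℤ) + 2*c + 1) * ((n+1:ℕ):ℤ)) * qint ((n:ℤ)+1-((n+1:ℕ):ℤ))
        / (qfact (n+1) * qfact (n+1-(n+1))) = 0 := by
      rw [cast1, show (n:ℤ)+1-((n:ℤ)+1) = 0 by ring, qint_zero]
      simp
    rw [hlast, add_zero, F]
    refine Finset.sum_congr rfl fun x hx => ?_
    have hxn : x ≤ n := by simpa [Nat.lt_succ_iff] using hx
    have hsub : n + 1 - x = (n - x) + 1 := by omega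
    have hcast : (n:ℤ)+1-(x:ℤ) = ((n-x : ℕ) : ℤ) + 1 := by
      have : ((n-x : ℕ) : ℤ) = (n:ℤ) - (x:ℤ) := by
        rw [Int.ofNat_sub hxn]
      rw [this]; ring
    rw [hsub, qfact_succ, hcast]
    rw [div_eq_div_iff (by
        exact mul_ne_zero (qfact_ne x) (mul_ne_zero (qfact_ne (n-x)) (qint_succ_ne (n-x))))
      (mul_ne_zero (qfact_ne x) (qfact_ne (n-x)))]
    ring
  -- Second sum = - v^(-2(n+c+1)) * F n c
  have hB : (∑ x ∈ Finset.range (n+2),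
      (-1:K)^x * v ^ (-((n:ℤ) + 2*c + 1) * (x:ℤ) - ((n:ℤ)+1)) * qint (x:ℤ)
        / (qfact x * qfact (n+1-x))) = - (v ^ (-(2*((n:ℤ)+c+1))) * F n c) := by
    rw [Finset.sum_range_succ']
    have h0 : (-1:K)^0 * v ^ (-((n:ℤ) + 2*c + 1) * ((0:ℕ):ℤ) - ((n:ℤ)+1)) * qint ((0:ℕ):ℤ)
        / (qfact 0 * qfact (n+1-0)) = 0 := by
      norm_num [qint_zero]
    rw [h0, add_zero, F, Finset.mul_sum, ← Finset.sum_neg_distrib]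
    refine Finset.sum_congr rfl fun y hy => ?_
    have hsub : n + 1 - (y+1) = n - y := by omega
    have hcasty : ((y+1 : ℕ) : ℤ) = (y:ℤ)+1 := by push_cast; ring
    rw [hsub, qfact_succ y, hcasty]
    have hexp : v ^ (-((n:ℤ) + 2*c + 1) * ((y:ℤ)+1) - ((n:ℤ)+1))
        = v ^ (-(2*((n:ℤ)+c+1))) * v ^ (-((n:ℤ) + 2*c + 1) * (y:ℤ)) := by
      rw [← zpow_add₀ hv]; congr 1; ring
    rw [hexp]
    have hne1 := qfact_ne y
    have hne2 := qfact_ne (n-y)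
    have hne3 := qint_succ_ne y
    have hne3' : qint (1 + (y:ℤ)) ≠ 0 := by rw [add_comm]; exact hne3
    field_simp
    ring_nf
  rw [hA, hB]
  ring

lemma lemA (c : ℤ) (n : ℕ) :
    F n c = v ^ (-(n:ℤ)*c - (n:ℤ)*((n:ℤ)+1)/2) * (v - v⁻¹)^n
      * (∏ j ∈ Finset.range n, qint (c + (j:ℤ) + 1)) / qfact n := by
  induction n with
  | zero =>
    have h0 : qfact 0 = 1 := by simp [qfact]
    simp [F, h0]
  | succ n ih =>
    have hq := qint_succ_ne n
    have hF : F (n+1) c = (1 - v ^ (-(2*((n:ℤ)+c+1)))) * F n c / qint ((n:ℤ)+1) := by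
      rw [eq_div_iff hq]
      linear_combination F_rec n c
    rw [hF, one_sub_sq ((n:ℤ)+c+1), ih, Finset.prod_range_succ, qfact_succ]
    have hexp : v ^ (-((n:ℤ)+c+1)) * v ^ (-(n:ℤ)*c - (n:ℤ)*((n:ℤ)+1)/2)
        = v ^ (-((n+1:ℕ):ℤ)*c - ((n+1:ℕ):ℤ)*(((n+1:ℕ):ℤ)+1)/2) := by
      rw [← zpow_add₀ hv]
      congr 1
      push_cast
      rw [show ((n:ℤ)+1+1) = (n:ℤ)+2 from by ring]
      linarith [Ehelper (n:ℤ) c]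
    rw [← hexp]
    have hq1 : qint ((n:ℤ)+c+1) = qint (c+(n:ℤ)+1) := by ring_nf
    rw [hq1]
    have h1 := qfact_ne n
    field_simp
    ring

lemma Ehelper2 (f u : ℤ) :
    (u*(1-f) - u*(u+1)/2) + (-((f-u)*u) - (f-u)*((f-u)+1)/2)
      = -(f + 2*(-1) + 1)*u + (-(f*(f+1)/2)) := by
  obtain ⟨a, ha⟩ := Int.even_mul_succ_self u
  obtain ⟨b, hb⟩ := Int.even_mul_succ_self (f-u)
  obtain ⟨d, hd⟩ := Int.even_mul_succ_self f
  have ha2 : u*(u+1) = 2*a := by linarith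
  have hb2 : (f-u)*((f-u)+1) = 2*b := by linarith
  have hd2 : f*(f+1) = 2*d := by linarith
  rw [ha2, hb2, hd2, Int.mul_ediv_cancel_left _ two_ne_zero,
    Int.mul_ediv_cancel_left _ two_ne_zero, Int.mul_ediv_cancel_left _ two_ne_zero]
  have h2 : 2*d = 2*a + 2*b + 2*((f-u)*u) := by
    rw [← ha2, ← hb2, ← hd2]; ring
  have h3 : d = a + b + (f-u)*u := by linarith
  linear_combination h3

theorem stmt11 (f : ℕ) (hf : 1 ≤ f) :
    ∑ u ∈ Finset.range (f + 1), ∑ x ∈ Finset.range (f - u + 1),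
      (-1 : K) ^ (u + x) *
        v ^ ((u : ℤ) * (1 - (f : ℤ)) - (u : ℤ) * ((u : ℤ) + 1) / 2
              - ((f : ℤ) + u + 1) * x) *
        (1 / (qfact x * qfact (f - u - x))) * (v - v⁻¹) ^ u
    = 0 := by
  have key : ∀ u ∈ Finset.range (f+1),
      (∑ x ∈ Finset.range (f - u + 1),
        (-1 : K) ^ (u + x) *
          v ^ ((u : ℤ) * (1 - (f : ℤ)) - (u : ℤ) * ((u : ℤ) + 1) / 2
                - ((f : ℤ) + u + 1) * x) *
          (1 / (qfact x * qfact (f - u - x))) * (v - v⁻¹) ^ u)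
      = (v ^ (-((f:ℤ)*((f:ℤ)+1)/2)) * (v - v⁻¹)^f * qfact f) *
          ((-1:K)^u * v ^ (-((f:ℤ) + 2*(-1) + 1) * (u:ℤ)) / (qfact u * qfact (f - u))) := by
    intro u hu
    have hu' : u ≤ f := by simpa [Nat.lt_succ_iff] using hu
    have hcast : ((f-u:ℕ):ℤ) = (f:ℤ)-(u:ℤ) := Int.ofNat_sub hu'
    have stepA : (∑ x ∈ Finset.range (f - u + 1),
        (-1 : K) ^ (u + x) *
          v ^ ((u : ℤ) * (1 - (f : ℤ)) - (u : ℤ) * ((u : ℤ) + 1) / 2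
                - ((f : ℤ) + u + 1) * x) *
          (1 / (qfact x * qfact (f - u - x))) * (v - v⁻¹) ^ u)
        = ((-1:K)^u * v ^ ((u:ℤ)*(1-(f:ℤ)) - (u:ℤ)*((u:ℤ)+1)/2) * (v - v⁻¹)^u)
            * F (f-u) u := by
      rw [F, Finset.mul_sum]
      refine Finset.sum_congr rfl fun x hx => ?_
      have s1 : v ^ ((u:ℤ)*(1-(f:ℤ)) - (u:ℤ)*((u:ℤ)+1)/2 - ((f:ℤ)+u+1)*(x:ℤ))
          = v ^ ((u:ℤ)*(1-(f:ℤ)) - (u:ℤ)*((u:ℤ)+1)/2)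
            * v ^ (-(((f-u:ℕ):ℤ) + 2*(u:ℤ) + 1) * (x:ℤ)) := by
        rw [← zpow_add₀ hv]
        congr 1
        rw [hcast]
        ring
      rw [pow_add, s1]
      ring
    rw [stepA, lemA]
    have hP : qfact f = qfact u * ∏ j ∈ Finset.range (f-u), qint ((u:ℤ) + (j:ℤ) + 1) := by
      have h := qfact_add u (f-u)
      rwa [show u + (f-u) = f from by omega] at h
    have hW : (v - v⁻¹)^u * (v - v⁻¹)^(f-u) = (v - v⁻¹)^f := by
      rw [← pow_add, show u + (f-u) = f from by omega]
    have hE : v ^ ((u:ℤ)*(1-(f:ℤ)) - (u:ℤ)*((u:ℤ)+1)/2)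
          * v ^ (-((f:ℤ)-(u:ℤ))*(u:ℤ) - ((f:ℤ)-(u:ℤ))*(((f:ℤ)-(u:ℤ))+1)/2)
        = v ^ (-((f:ℤ) + 2*(-1) + 1) * (u:ℤ)) * v ^ (-((f:ℤ)*((f:ℤ)+1)/2)) := by
      rw [← zpow_add₀ hv, ← zpow_add₀ hv]
      congr 1
      linear_combination Ehelper2 (f:ℤ) (u:ℤ)
    rw [hP, hcast]
    have h1 := qfact_ne u
    have h2 := qfact_ne (f-u)
    have hc1 : qfact u * (qfact u)⁻¹ = 1 := mul_inv_cancel₀ h1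
    generalize h1e : v ^ ((u:ℤ)*(1-(f:ℤ)) - (u:ℤ)*((u:ℤ)+1)/2) = E1 at hE ⊢
    generalize h2e : v ^ (-((f:ℤ)-(u:ℤ))*(u:ℤ) - ((f:ℤ)-(u:ℤ))*(((f:ℤ)-(u:ℤ))+1)/2) = E2 at hE ⊢
    generalize h3e : v ^ (-((f:ℤ) + 2*(-1) + 1) * (u:ℤ)) = E3 at hE ⊢
    generalize h4e : v ^ (-((f:ℤ)*((f:ℤ)+1)/2)) = E4 at hE ⊢
    generalize h5e : (∏ j ∈ Finset.range (f-u), qint ((u:ℤ) + (j:ℤ) + 1)) = P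
    linear_combination (((-1:K)^u * P) * (qfact (f-u))⁻¹ * (v - v⁻¹)^u * (v - v⁻¹)^(f-u)) * hE
      + (((-1:K)^u * P) * (qfact (f-u))⁻¹ * E3 * E4) * hW
      - (((-1:K)^u * P) * (qfact (f-u))⁻¹ * E3 * E4 * (v - v⁻¹)^f) * hc1
  rw [Finset.sum_congr rfl key, ← Finset.mul_sum, ← F]
  rw [lemA (-1) f]
  have hzero : (∏ j ∈ Finset.range f, qint ((-1) + (j:ℤ) + 1)) = 0 := by
    apply Finset.prod_eq_zero (Finset.mem_range.2 (by omega : 0 < f))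
    norm_num [qint_zero]
  rw [hzero]
  simp
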